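/- Let γ ∈ [0, 1) and r̄ ≥ 0 be real numbers. Let ι be a finite index set, let w : ι → ℝ satisfy w(i) ≥ 0 for all i and ∑_{i ∈ ι} w(i) = 1, let r : ℕ → ℝ satisfy 0 ≤ r(t) ≤ r̄ for all t, and for each i ∈ ι let r_i : ℕ → ℝ satisfy 0 ≤ r_i(t) ≤ r̄ for all t and r_i(0) = r(0). Then |∑_{i ∈ ι} w(i) · (∑_{t=0}^∞ γ^t · r_i(t)) − ∑_{t=0}^∞ γ^t · r(t)| ≤ 2 · r̄ · γ / (1 − γ). -/

import Mathlib

lemma q_summable (γ rbar : ℝ) (hγ0 : 0 ≤ γ) (hγ1 : γ < 1) (s : ℕ → ℝ)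
    (hs0 : ∀ t, 0 ≤ s t) (hs1 : ∀ t, s t ≤ rbar) :
    Summable (fun t : ℕ => γ ^ t * s t) := by
  apply Summable.of_nonneg_of_le (fun t => mul_nonneg (pow_nonneg hγ0 t) (hs0 t))
    (fun t => ?_) ((summable_geometric_of_lt_one hγ0 hγ1).mul_right rbar)
  exact mul_le_mul_of_nonneg_left (hs1 t) (pow_nonneg hγ0 t)

lemma q_bounds (γ rbar : ℝ) (hγ0 : 0 ≤ γ) (hγ1 : γ < 1) (s : ℕ → ℝ)
    (hs0 : ∀ t, 0 ≤ s t) (hs1 : ∀ t, s t ≤ rbar) :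
    s 0 ≤ (∑' t : ℕ, γ ^ t * s t) ∧
      (∑' t : ℕ, γ ^ t * s t) ≤ s 0 + rbar * γ / (1 - γ) := by
  have hsum := q_summable γ rbar hγ0 hγ1 s hs0 hs1
  have h1γ : (0:ℝ) < 1 - γ := by linarith
  constructor
  · have := Summable.le_tsum hsum 0 (fun t _ => mul_nonneg (pow_nonneg hγ0 t) (hs0 t))
    simpa using this
  · rw [Summable.tsum_eq_zero_add hsum]
    simp only [pow_zero, one_mul]
    gcongr
    have hb : ∀ n : ℕ, γ ^ (n+1) * s (n+1) ≤ γ ^ (n+1) * rbar :=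
      fun n => mul_le_mul_of_nonneg_left (hs1 (n+1)) (pow_nonneg hγ0 _)
    have hs2 : Summable (fun n : ℕ => γ ^ (n+1) * rbar) := by
      simpa [pow_succ, mul_comm, mul_assoc, mul_left_comm] using
        (((summable_geometric_of_lt_one hγ0 hγ1).mul_right rbar).mul_left γ)
    calc (∑' n : ℕ, γ ^ (n+1) * s (n+1))
        ≤ ∑' n : ℕ, γ ^ (n+1) * rbar := by
          apply Summable.tsum_le_tsum hb ((q_summable γ rbar hγ0 hγ1 s hs0 hs1).comp_injective
            (add_left_injective 1)) hs2
      _ = rbar * γ / (1 - γ) := by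
          have : (∑' n : ℕ, γ ^ (n+1) * rbar) = γ * (∑' n : ℕ, γ ^ n) * rbar := by
            rw [← tsum_mul_left, ← tsum_mul_right]
            congr 1; ext n; ring
          rw [this, tsum_geometric_of_lt_one hγ0 hγ1]
          field_simp

/-- Lemma 1: the approximated Q function, a convex combination of discounted
returns of reward trajectories agreeing with the true trajectory at time `0`,
differs from the true discounted return by at most `2 * r̄ * γ / (1 - γ)`. -/
theorem approx_Q_error_bound
    (γ rbar : ℝ) (hγ0 : 0 ≤ γ) (hγ1 : γ < 1) (hrbar : 0 ≤ rbar)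
    {ι : Type*} [Fintype ι] (w : ι → ℝ) (hw0 : ∀ i, 0 ≤ w i)
    (hw1 : ∑ i, w i = 1)
    (r : ℕ → ℝ) (hr0 : ∀ t, 0 ≤ r t) (hr1 : ∀ t, r t ≤ rbar)
    (ri : ι → ℕ → ℝ)
    (hri0 : ∀ i t, 0 ≤ ri i t) (hri1 : ∀ i t, ri i t ≤ rbar)
    (hinit : ∀ i, ri i 0 = r 0) :
    |(∑ i, w i * ∑' t : ℕ, γ ^ t * ri i t) - ∑' t : ℕ, γ ^ t * r t|
      ≤ 2 * rbar * γ / (1 - γ) := by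
  have h1γ : (0:ℝ) < 1 - γ := by linarith
  have hC : 0 ≤ rbar * γ / (1 - γ) :=
    div_nonneg (mul_nonneg hrbar hγ0) h1γ.le
  have hr := q_bounds γ rbar hγ0 hγ1 r hr0 hr1
  have hlb : ∑ i, w i * r 0 ≤ ∑ i, w i * ∑' t : ℕ, γ ^ t * ri i t := by
    apply Finset.sum_le_sum
    intro i _
    have := (q_bounds γ rbar hγ0 hγ1 (ri i) (hri0 i) (hri1 i)).1
    rw [hinit i] at this
    exact mul_le_mul_of_nonneg_left this (hw0 i)
  have hub : ∑ i, w i * ∑' t : ℕ, γ ^ t * ri i t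
      ≤ ∑ i, w i * (r 0 + rbar * γ / (1 - γ)) := by
    apply Finset.sum_le_sum
    intro i _
    have := (q_bounds γ rbar hγ0 hγ1 (ri i) (hri0 i) (hri1 i)).2
    rw [hinit i] at this
    exact mul_le_mul_of_nonneg_left this (hw0 i)
  rw [← Finset.sum_mul, hw1, one_mul] at hlb hub
  rw [abs_sub_le_iff]
  constructor
  · have h1 := hr.1
    have : 2 * rbar * γ / (1 - γ) = 2 * (rbar * γ / (1 - γ)) := by ring
    rw [this]; linarith
  · have h2 := hr.2
    have : 2 * rbar * γ / (1 - γ) = 2 * (rbar * γ / (1 - γ)) := by ring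
    rw [this]; linarith
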